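/- Let n = 2m and let η be a fixed-point-free involution of [n] (a product of m disjoint 2-cycles). If U is uniform on the conjugacy class of η (i.e., uniform over fixed-point-free involutions), then M = (1/2)·#{i ∈ [n] : U(i) = η(i)} satisfies, for every k ≥ 1, E[M(M-1)···(M-k+1)] = m(m-1)···(m-k+1) / ((2m-1)(2m-3)···(2m-2k+1)). -/

import Mathlib

set_option linter.unusedSectionVars false
set_option linter.unusedTactic false
open Finset Equiv Equiv.Perm

variable {α : Type*} [Fintype α] [DecidableEq α]

/-- The set of fixed-point-free involutions. -/
def stmt18F (α : Type*) [Fintype α] [DecidableEq α] : Finset (Equiv.Perm α) :=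
  univ.filter (fun U => U * U = 1 ∧ ∀ i, U i ≠ i)

/-- Double factorial counter: g m = (2m-1)!! -/
def stmt18g : ℕ → ℕ
  | 0 => 1
  | (m+1) => (2*m+1) * stmt18g m

lemma stmt18_castDesc (n k : ℕ) :
    ((Nat.descFactorial n k : ℕ) : ℚ) = ∏ j ∈ Finset.range k, ((n : ℚ) - j) := by
  induction k with
  | zero => simp
  | succ k ih =>
    rw [Finset.prod_range_succ, ← ih, Nat.descFactorial_succ]
    rcases lt_or_ge n k with h | h
    · rw [Nat.descFactorial_eq_zero_iff_lt.2 h]; simp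
    · push_cast [h]; ring

lemma stmt18_even_card (s : Finset α) (f : α → α) (h1 : ∀ x ∈ s, f x ∈ s)
    (h2 : ∀ x ∈ s, f (f x) = x) (h3 : ∀ x ∈ s, f x ≠ x) : Even s.card := by
  generalize hn : s.card = n
  induction n using Nat.strong_induction_on generalizing s with
  | _ n ih =>
  subst hn
  rcases s.eq_empty_or_nonempty with rfl | ⟨x, hx⟩
  · simp
  · have hsub : {x, f x} ⊆ s := by
      intro y hy; rcases Finset.mem_insert.1 hy with rfl | hy
      · exact hx
      · rw [Finset.mem_singleton.1 hy]; exact h1 x hx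
    have hcardp : ({x, f x} : Finset α).card = 2 := Finset.card_pair (Ne.symm (h3 x hx))
    have hcard : (s \ {x, f x}).card = s.card - 2 := by
      rw [Finset.card_sdiff_of_subset hsub, hcardp]
    have hmem : ∀ y ∈ s \ {x, f x}, y ∈ s ∧ y ≠ x ∧ y ≠ f x := by
      intro y hy
      have := Finset.mem_sdiff.1 hy
      refine ⟨this.1, ?_, ?_⟩ <;> simp_all [Finset.mem_insert]
    have h2le : 2 ≤ s.card := hcardp ▸ Finset.card_le_card hsub
    have hev : Even (s \ {x, f x}).card := by
      refine ih ((s \ {x, f x}).card) (by omega) _ ?_ ?_ ?_ rfl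
      · intro y hy
        obtain ⟨hys, hyx, hyfx⟩ := hmem y hy
        refine Finset.mem_sdiff.2 ⟨h1 y hys, ?_⟩
        simp only [Finset.mem_insert, Finset.mem_singleton, not_or]
        constructor
        · intro h; exact hyfx (by rw [← h2 y hys, h])
        · intro h; exact hyx (by
            have := congrArg f h
            rwa [h2 y hys, h2 x hx] at this)
      · intro y hy; exact h2 y (hmem y hy).1
      · intro y hy; exact h3 y (hmem y hy).1
    rcases hev with ⟨t, ht⟩
    exact ⟨t + 1, by omega⟩

lemma stmt18_invol_apply {U : Equiv.Perm α} (hU : U * U = 1) (x : α) : U (U x) = x := by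
  have h := Equiv.ext_iff.1 hU x
  simpa [Equiv.Perm.mul_apply] using h

lemma stmt18_pres {U : Equiv.Perm α} (hU : U * U = 1) {a b : α} (hUa : U a = b) (x : α) :
    (U x ≠ a ∧ U x ≠ b) ↔ (x ≠ a ∧ x ≠ b) := by
  have hUb : U b = a := by rw [← hUa]; exact stmt18_invol_apply hU a
  rw [Iff.comm]
  constructor
  · rintro ⟨h1, h2⟩
    refine ⟨fun h => h2 ?_, fun h => h1 ?_⟩
    · rw [← stmt18_invol_apply hU x, h, hUa]
    · rw [← stmt18_invol_apply hU x, h, hUb]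
  · rintro ⟨h1, h2⟩
    refine ⟨fun h => h2 ?_, fun h => h1 ?_⟩
    · rw [h, hUa]
    · rw [h, hUb]

lemma stmt18_W_a {a b : α} (V : Equiv.Perm {x : α // x ≠ a ∧ x ≠ b}) :
    Equiv.Perm.ofSubtype V a = a :=
  Equiv.Perm.ofSubtype_apply_of_not_mem V (by simp)

lemma stmt18_W_b {a b : α} (V : Equiv.Perm {x : α // x ≠ a ∧ x ≠ b}) :
    Equiv.Perm.ofSubtype V b = b :=
  Equiv.Perm.ofSubtype_apply_of_not_mem V (by simp)

lemma stmt18_W_mem {a b : α} (V : Equiv.Perm {x : α // x ≠ a ∧ x ≠ b}) {x : α}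
    (hx : x ≠ a ∧ x ≠ b) : Equiv.Perm.ofSubtype V x = ↑(V ⟨x, hx⟩) :=
  Equiv.Perm.ofSubtype_apply_of_mem V hx

lemma stmt18_ext_mem {a b : α} (hab : a ≠ b) {V : Equiv.Perm {x : α // x ≠ a ∧ x ≠ b}}
    (hV : V ∈ stmt18F {x : α // x ≠ a ∧ x ≠ b}) :
    Equiv.swap a b * Equiv.Perm.ofSubtype V
      ∈ (stmt18F α).filter (fun U => U a = b) := by
  obtain ⟨-, hV1, hV2⟩ := Finset.mem_filter.1 hV
  have hV1' := Finset.mem_filter.1 hV |>.2.1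
  refine Finset.mem_filter.2 ⟨Finset.mem_filter.2 ⟨Finset.mem_univ _, ?_, ?_⟩, ?_⟩
  · ext x
    simp only [Equiv.Perm.mul_apply, Equiv.Perm.one_apply]
    rcases eq_or_ne x a with rfl | hxa
    · rw [stmt18_W_a, Equiv.swap_apply_left, stmt18_W_b, Equiv.swap_apply_right]
    rcases eq_or_ne x b with rfl | hxb
    · rw [stmt18_W_b, Equiv.swap_apply_right, stmt18_W_a, Equiv.swap_apply_left]
    · have hx : x ≠ a ∧ x ≠ b := ⟨hxa, hxb⟩
      rw [stmt18_W_mem V hx, Equiv.swap_apply_of_ne_of_ne (V ⟨x, hx⟩).2.1 (V ⟨x, hx⟩).2.2,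
        stmt18_W_mem V (V ⟨x, hx⟩).2, Equiv.swap_apply_of_ne_of_ne]
      · congr 1
        have : V (V ⟨x, hx⟩) = ⟨x, hx⟩ := by
          have := stmt18_invol_apply hV1 (⟨x, hx⟩ : {x : α // x ≠ a ∧ x ≠ b})
          simpa using this
        rw [show (⟨↑(V ⟨x, hx⟩), (V ⟨x, hx⟩).2⟩ : {x : α // x ≠ a ∧ x ≠ b}) = V ⟨x, hx⟩
          from rfl, this]
      · rw [show (⟨↑(V ⟨x, hx⟩), (V ⟨x, hx⟩).2⟩ : {x : α // x ≠ a ∧ x ≠ b}) = V ⟨x, hx⟩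
          from rfl]
        exact (V (V ⟨x, hx⟩)).2.1
      · rw [show (⟨↑(V ⟨x, hx⟩), (V ⟨x, hx⟩).2⟩ : {x : α // x ≠ a ∧ x ≠ b}) = V ⟨x, hx⟩
          from rfl]
        exact (V (V ⟨x, hx⟩)).2.2
  · intro x
    simp only [Equiv.Perm.mul_apply]
    rcases eq_or_ne x a with rfl | hxa
    · rw [stmt18_W_a, Equiv.swap_apply_left]; exact hab.symm
    rcases eq_or_ne x b with rfl | hxb
    · rw [stmt18_W_b, Equiv.swap_apply_right]; exact hab
    · have hx : x ≠ a ∧ x ≠ b := ⟨hxa, hxb⟩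
      rw [stmt18_W_mem V hx, Equiv.swap_apply_of_ne_of_ne (V ⟨x, hx⟩).2.1 (V ⟨x, hx⟩).2.2]
      intro h
      exact hV2 ⟨x, hx⟩ (Subtype.ext h)
  · simp only [Equiv.Perm.mul_apply]
    rw [stmt18_W_a, Equiv.swap_apply_left]

lemma stmt18_fiber {β : Type*} [AddCommMonoid β] (a b : α) (hab : a ≠ b)
    (F : Equiv.Perm α → β) :
    ∑ U ∈ (stmt18F α).filter (fun U => U a = b), F U
      = ∑ V ∈ stmt18F {x : α // x ≠ a ∧ x ≠ b}, F (Equiv.swap a b * Equiv.Perm.ofSubtype V) := by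
  refine (Finset.sum_bij' (i := fun V (_ : V ∈ stmt18F {x : α // x ≠ a ∧ x ≠ b}) =>
      Equiv.swap a b * Equiv.Perm.ofSubtype V)
    (j := fun U hU => U.subtypePerm (stmt18_pres (Finset.mem_filter.1
      ((Finset.mem_filter.1 hU).1) |>.2.1) (Finset.mem_filter.1 hU).2))
    (fun V hV => stmt18_ext_mem hab hV) ?_ ?_ ?_ (fun V hV => rfl)).symm
  · -- j maps into stmt18F α'
    intro U hU
    obtain ⟨hU', hUa⟩ := Finset.mem_filter.1 hU
    obtain ⟨-, hU1, hU2⟩ := Finset.mem_filter.1 hU'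
    refine Finset.mem_filter.2 ⟨Finset.mem_univ _, ?_, ?_⟩
    · rw [Equiv.Perm.subtypePerm_mul]
      ext x
      simp [Equiv.Perm.subtypePerm_apply, hU1, Subtype.ext_iff, stmt18_invol_apply hU1]
    · intro x h
      exact hU2 x (congrArg Subtype.val h)
  · -- left inverse : j (i V) = V
    intro V hV
    ext x
    simp only [Equiv.Perm.subtypePerm_apply, Equiv.Perm.mul_apply]
    rw [stmt18_W_mem V x.2, Equiv.swap_apply_of_ne_of_ne (V x).2.1 (V x).2.2]
  · -- right inverse : i (j U) = U
    intro U hU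
    obtain ⟨hU', hUa⟩ := Finset.mem_filter.1 hU
    obtain ⟨-, hU1, hU2⟩ := Finset.mem_filter.1 hU'
    have hUb : U b = a := by rw [← hUa]; exact stmt18_invol_apply hU1 a
    ext x
    simp only [Equiv.Perm.mul_apply]
    rcases eq_or_ne x a with rfl | hxa
    · rw [stmt18_W_a, Equiv.swap_apply_left, hUa]
    rcases eq_or_ne x b with rfl | hxb
    · rw [stmt18_W_b, Equiv.swap_apply_right, hUb]
    · have hx : x ≠ a ∧ x ≠ b := ⟨hxa, hxb⟩
      rw [stmt18_W_mem _ hx]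
      have hxU := (stmt18_pres hU1 hUa x).2 hx
      rw [show ((U.subtypePerm (stmt18_pres hU1 hUa)) (⟨x, hx⟩ : {x : α // x ≠ a ∧ x ≠ b}) : α) = U x from rfl]
      exact Equiv.swap_apply_of_ne_of_ne hxU.1 hxU.2

lemma stmt18_card_subtype (a b : α) (hab : a ≠ b) :
    Fintype.card {x : α // x ≠ a ∧ x ≠ b} = Fintype.card α - 2 := by
  rw [Fintype.card_subtype]
  have h : Finset.univ.filter (fun x : α => x ≠ a ∧ x ≠ b) = Finset.univ \ {a, b} := by
    ext x
    simp [not_or]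
  rw [h, Finset.card_sdiff_of_subset (Finset.subset_univ _), Finset.card_pair hab, Finset.card_univ]

lemma stmt18_sub_mem {U : Equiv.Perm α} (hU1 : U * U = 1) (hU2 : ∀ i, U i ≠ i)
    {a b : α} (hUa : U a = b) :
    U.subtypePerm (stmt18_pres hU1 hUa) ∈ stmt18F {x : α // x ≠ a ∧ x ≠ b} := by
  refine Finset.mem_filter.2 ⟨Finset.mem_univ _, ?_, ?_⟩
  · rw [Equiv.Perm.subtypePerm_mul]
    ext x
    simp [Equiv.Perm.subtypePerm_apply, hU1, Subtype.ext_iff, stmt18_invol_apply hU1]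
  · intro x h
    exact hU2 x (congrArg Subtype.val h)

lemma stmt18_count : ∀ (m : ℕ) (α : Type*) [Fintype α] [DecidableEq α],
    Fintype.card α = 2 * m → (stmt18F α).card = stmt18g m := by
  intro m
  induction m with
  | zero =>
    intro α _ _ h
    haveI : IsEmpty α := Fintype.card_eq_zero_iff.1 (by omega)
    have h1 : stmt18F α = {1} := by
      apply Finset.eq_singleton_iff_unique_mem.2
      refine ⟨Finset.mem_filter.2 ⟨Finset.mem_univ _, by simp, fun i => isEmptyElim i⟩, ?_⟩
      intro U _
      exact Equiv.ext fun x => isEmptyElim x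
    rw [h1, Finset.card_singleton, stmt18g]
  | succ m ih =>
    intro α _ _ h
    have hpos : 0 < Fintype.card α := by omega
    obtain ⟨a⟩ := Fintype.card_pos_iff.1 hpos
    have hfib : (stmt18F α).card
        = ∑ b ∈ Finset.univ.erase a, ((stmt18F α).filter (fun U => U a = b)).card := by
      apply Finset.card_eq_sum_card_fiberwise
      intro U hU
      obtain ⟨-, -, hU2⟩ := Finset.mem_filter.1 hU
      exact Finset.mem_erase.2 ⟨hU2 a, Finset.mem_univ _⟩
    rw [hfib]
    have hval : ∀ b ∈ Finset.univ.erase a,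
        ((stmt18F α).filter (fun U => U a = b)).card = stmt18g m := by
      intro b hb
      have hab : a ≠ b := (Finset.mem_erase.1 hb).1.symm
      have := stmt18_fiber a b hab (fun _ => (1 : ℕ))
      simp only [Finset.sum_const, smul_eq_mul, mul_one] at this
      rw [this]
      exact ih _ (by rw [stmt18_card_subtype a b hab, h]; omega)
    rw [Finset.sum_congr rfl hval, Finset.sum_const, smul_eq_mul,
      Finset.card_erase_of_mem (Finset.mem_univ a), Finset.card_univ, h]
    rw [show 2 * (m + 1) - 1 = 2 * m + 1 by omega, stmt18g]


lemma stmt18_Mcard {η : Equiv.Perm α} (hη1 : η * η = 1) {a b : α} (hba : η a = b) (ha : a ≠ b)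
    (V : Equiv.Perm {x : α // x ≠ a ∧ x ≠ b}) :
    (Finset.univ.filter fun i : α => (Equiv.swap a b * Equiv.Perm.ofSubtype V) i = η i).card
      = (Finset.univ.filter fun i : {x : α // x ≠ a ∧ x ≠ b} =>
          V i = (η.subtypePerm (stmt18_pres hη1 hba)) i).card + 2 := by
  have hb : η b = a := by rw [← hba]; exact stmt18_invol_apply hη1 a
  have hab : a ≠ b := ha
  have hEa : (Equiv.swap a b * Equiv.Perm.ofSubtype V) a = b := by
    rw [Equiv.Perm.mul_apply, stmt18_W_a, Equiv.swap_apply_left]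
  have hEb : (Equiv.swap a b * Equiv.Perm.ofSubtype V) b = a := by
    rw [Equiv.Perm.mul_apply, stmt18_W_b, Equiv.swap_apply_right]
  have hEx : ∀ (x : α) (hx : x ≠ a ∧ x ≠ b),
      (Equiv.swap a b * Equiv.Perm.ofSubtype V) x = ↑(V ⟨x, hx⟩) := by
    intro x hx
    rw [Equiv.Perm.mul_apply, stmt18_W_mem V hx,
      Equiv.swap_apply_of_ne_of_ne (V ⟨x, hx⟩).2.1 (V ⟨x, hx⟩).2.2]
  have hset : (Finset.univ.filter fun i : α => (Equiv.swap a b * Equiv.Perm.ofSubtype V) i = η i)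
      = insert a (insert b ((Finset.univ.filter fun i : {x : α // x ≠ a ∧ x ≠ b} =>
          V i = (η.subtypePerm (stmt18_pres hη1 hba)) i).map
            ⟨Subtype.val, Subtype.val_injective⟩)) := by
    ext x
    simp only [Finset.mem_filter, Finset.mem_univ, true_and, Finset.mem_insert,
      Finset.mem_map, Function.Embedding.coeFn_mk]
    rcases eq_or_ne x a with rfl | hxa
    · simp [hEa, hba]
    rcases eq_or_ne x b with rfl | hxb
    · simp [hEb, hb]
    · have hx : x ≠ a ∧ x ≠ b := ⟨hxa, hxb⟩
      rw [hEx x hx]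
      constructor
      · intro hvx
        refine Or.inr (Or.inr ⟨⟨x, hx⟩, ?_, rfl⟩)
        exact Subtype.ext hvx
      · rintro (rfl | rfl | ⟨y, hy, rfl⟩)
        · exact absurd rfl hxa
        · exact absurd rfl hxb
        · have h2 := congrArg Subtype.val hy
          simpa using h2
  rw [hset, Finset.card_insert_of_notMem, Finset.card_insert_of_notMem, Finset.card_map]
  · simp only [Finset.mem_map, Function.Embedding.coeFn_mk, not_exists]
    rintro y ⟨-, h⟩
    exact y.2.2 h
  · simp only [Finset.mem_insert, Finset.mem_map, Function.Embedding.coeFn_mk, not_or, not_exists]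
    refine ⟨hab, ?_⟩
    rintro y ⟨-, h⟩
    exact y.2.1 h

lemma stmt18_S : ∀ (k m : ℕ) (α : Type*) [Fintype α] [DecidableEq α] (η : Equiv.Perm α),
    Fintype.card α = 2 * m → η * η = 1 → (∀ i, η i ≠ i) →
    ((∑ U ∈ stmt18F α,
        Nat.descFactorial ((Finset.univ.filter fun i => U i = η i).card / 2) k : ℕ) : ℚ)
        * ∏ j ∈ Finset.range k, ((2 * m : ℚ) - (2 * j + 1))
      = (Nat.descFactorial m k : ℚ) * stmt18g m := by
  intro k
  induction k with
  | zero =>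
    intro m α _ _ η hcard hη1 hη2
    simp [stmt18_count m α hcard]
  | succ k ih =>
    intro m α _ _ η hcard hη1 hη2
    rcases m with _ | m'
    · haveI : IsEmpty α := Fintype.card_eq_zero_iff.1 (by omega)
      have hz : ∀ U ∈ stmt18F α,
          Nat.descFactorial ((Finset.univ.filter fun i => U i = η i).card / 2) (k+1) = 0 := by
        intro U _
        rw [Finset.univ_eq_empty]
        simp
      rw [Finset.sum_congr rfl hz]
      simp
    · -- key per-U identity
      have hkey : ∀ U ∈ stmt18F α,
          2 * Nat.descFactorial ((Finset.univ.filter fun i => U i = η i).card / 2) (k+1)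
            = ∑ _i ∈ Finset.univ.filter (fun i => U i = η i),
                Nat.descFactorial ((Finset.univ.filter fun j => U j = η j).card / 2 - 1) k := by
        intro U hU
        obtain ⟨-, hU1, hU2⟩ := Finset.mem_filter.1 hU
        have hev : Even (Finset.univ.filter fun i => U i = η i).card := by
          apply stmt18_even_card _ η
          · intro x hx
            have hx' := (Finset.mem_filter.1 hx).2
            refine Finset.mem_filter.2 ⟨Finset.mem_univ _, ?_⟩
            rw [← hx', stmt18_invol_apply hU1, hx']
            exact (stmt18_invol_apply hη1 x).symm
          · intro x _; exact stmt18_invol_apply hη1 x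
          · intro x _; exact hη2 x
        rw [Finset.sum_const, smul_eq_mul]
        set c := (Finset.univ.filter fun i => U i = η i).card with hc
        have hd : Nat.descFactorial (c/2) (k+1) = (c/2) * Nat.descFactorial (c/2 - 1) k := by
          rcases Nat.eq_zero_or_pos (c/2) with h | h
          · simp [h]
          · obtain ⟨t, ht⟩ : ∃ t, c/2 = t+1 := ⟨c/2-1, by omega⟩
            rw [ht, Nat.succ_descFactorial_succ]
            simp
        have h2 : 2 * (c/2) = c := by
          obtain ⟨t, ht⟩ := hev; omega
        rw [hd, ← mul_assoc, h2]
      have hswap : 2 * (∑ U ∈ stmt18F α,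
            Nat.descFactorial ((Finset.univ.filter fun i => U i = η i).card / 2) (k+1))
          = ∑ i : α, ∑ U ∈ (stmt18F α).filter (fun U => U i = η i),
              Nat.descFactorial ((Finset.univ.filter fun j => U j = η j).card / 2 - 1) k := by
        rw [Finset.mul_sum, Finset.sum_congr rfl hkey]
        have e1 : ∀ U ∈ stmt18F α,
            (∑ _i ∈ Finset.univ.filter (fun i => U i = η i),
              Nat.descFactorial ((Finset.univ.filter fun j => U j = η j).card / 2 - 1) k)
            = ∑ i : α, if U i = η i then
                Nat.descFactorial ((Finset.univ.filter fun j => U j = η j).card / 2 - 1) k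
              else 0 := fun U _ => Finset.sum_filter _ _
        rw [Finset.sum_congr rfl e1, Finset.sum_comm]
        exact Finset.sum_congr rfl fun i _ => (Finset.sum_filter _ _).symm
      have hfib2 : ∀ i : α,
          (∑ U ∈ (stmt18F α).filter (fun U => U i = η i),
            Nat.descFactorial ((Finset.univ.filter fun j => U j = η j).card / 2 - 1) k)
          = ∑ V ∈ stmt18F {x : α // x ≠ i ∧ x ≠ η i},
              Nat.descFactorial ((Finset.univ.filter fun y : {x : α // x ≠ i ∧ x ≠ η i} =>
                V y = (η.subtypePerm (stmt18_pres hη1 rfl)) y).card / 2) k := by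
        intro i
        rw [stmt18_fiber i (η i) (Ne.symm (hη2 i))
          (fun U => Nat.descFactorial ((Finset.univ.filter fun j => U j = η j).card / 2 - 1) k)]
        refine Finset.sum_congr rfl fun V hV => ?_
        rw [stmt18_Mcard hη1 rfl (Ne.symm (hη2 i)) V]
        congr 1
        omega
      have hIH : ∀ i : α,
          ((∑ V ∈ stmt18F {x : α // x ≠ i ∧ x ≠ η i},
              Nat.descFactorial ((Finset.univ.filter fun y : {x : α // x ≠ i ∧ x ≠ η i} =>
                V y = (η.subtypePerm (stmt18_pres hη1 rfl)) y).card / 2) k : ℕ) : ℚ)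
            * ∏ j ∈ Finset.range k, ((2 * m' : ℚ) - (2 * j + 1))
          = (Nat.descFactorial m' k : ℚ) * stmt18g m' := by
        intro i
        have hmem := stmt18_sub_mem hη1 hη2 (rfl : η i = η i)
        obtain ⟨-, h1, h2⟩ := Finset.mem_filter.1 hmem
        exact ih m' _ _
          (by rw [stmt18_card_subtype i (η i) (Ne.symm (hη2 i)), hcard]; omega) h1 h2
      have hnat : (2 * (∑ U ∈ stmt18F α,
            Nat.descFactorial ((Finset.univ.filter fun i => U i = η i).card / 2) (k+1)) : ℕ)
          = ∑ i : α, (∑ V ∈ stmt18F {x : α // x ≠ i ∧ x ≠ η i},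
              Nat.descFactorial ((Finset.univ.filter fun y : {x : α // x ≠ i ∧ x ≠ η i} =>
                V y = (η.subtypePerm (stmt18_pres hη1 rfl)) y).card / 2) k) :=
        hswap.trans (Finset.sum_congr rfl fun i _ => hfib2 i)
      have hQ : (2 : ℚ) * ((∑ U ∈ stmt18F α,
            Nat.descFactorial ((Finset.univ.filter fun i => U i = η i).card / 2) (k+1) : ℕ) : ℚ)
            * ∏ j ∈ Finset.range k, ((2 * m' : ℚ) - (2 * j + 1))
          = 2 * (m' + 1) * ((Nat.descFactorial m' k : ℚ) * stmt18g m') := by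
        have h1 : ((2 * (∑ U ∈ stmt18F α,
            Nat.descFactorial ((Finset.univ.filter fun i => U i = η i).card / 2) (k+1)) : ℕ) : ℚ)
            = ∑ i : α, ((∑ V ∈ stmt18F {x : α // x ≠ i ∧ x ≠ η i},
              Nat.descFactorial ((Finset.univ.filter fun y : {x : α // x ≠ i ∧ x ≠ η i} =>
                V y = (η.subtypePerm (stmt18_pres hη1 rfl)) y).card / 2) k : ℕ) : ℚ) := by
          rw [hnat, Nat.cast_sum]
        calc (2 : ℚ) * ((∑ U ∈ stmt18F α,
              Nat.descFactorial ((Finset.univ.filter fun i => U i = η i).card / 2) (k+1) : ℕ) : ℚ)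
              * ∏ j ∈ Finset.range k, ((2 * m' : ℚ) - (2 * j + 1))
            = ((2 * (∑ U ∈ stmt18F α,
              Nat.descFactorial ((Finset.univ.filter fun i => U i = η i).card / 2) (k+1)) : ℕ) : ℚ)
              * ∏ j ∈ Finset.range k, ((2 * m' : ℚ) - (2 * j + 1)) := by push_cast; ring
          _ = (∑ i : α, ((∑ V ∈ stmt18F {x : α // x ≠ i ∧ x ≠ η i},
              Nat.descFactorial ((Finset.univ.filter fun y : {x : α // x ≠ i ∧ x ≠ η i} =>
                V y = (η.subtypePerm (stmt18_pres hη1 rfl)) y).card / 2) k : ℕ) : ℚ))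
              * ∏ j ∈ Finset.range k, ((2 * m' : ℚ) - (2 * j + 1)) := by rw [h1]
          _ = ∑ i : α, ((∑ V ∈ stmt18F {x : α // x ≠ i ∧ x ≠ η i},
              Nat.descFactorial ((Finset.univ.filter fun y : {x : α // x ≠ i ∧ x ≠ η i} =>
                V y = (η.subtypePerm (stmt18_pres hη1 rfl)) y).card / 2) k : ℕ) : ℚ)
              * ∏ j ∈ Finset.range k, ((2 * m' : ℚ) - (2 * j + 1)) := Finset.sum_mul ..
          _ = ∑ _i : α, (Nat.descFactorial m' k : ℚ) * stmt18g m' :=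
              Finset.sum_congr rfl fun i _ => hIH i
          _ = (Fintype.card α : ℚ) * ((Nat.descFactorial m' k : ℚ) * stmt18g m') := by
              rw [Finset.sum_const, Finset.card_univ, nsmul_eq_mul]
          _ = 2 * (m' + 1) * ((Nat.descFactorial m' k : ℚ) * stmt18g m') := by
              rw [hcard]; push_cast; ring
      rw [Finset.prod_range_succ']
      have hprod : (∏ j ∈ Finset.range k, ((2 * ((m' : ℚ) + 1)) - (2 * ((j : ℚ) + 1) + 1)))
          = ∏ j ∈ Finset.range k, ((2 * (m' : ℚ)) - (2 * (j : ℚ) + 1)) :=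
        Finset.prod_congr rfl fun j _ => by ring
      push_cast [Nat.succ_descFactorial_succ,
        show stmt18g (m' + 1) = (2 * m' + 1) * stmt18g m' from rfl]
      rw [hprod]
      push_cast at hQ
      linear_combination ((2 * (m' : ℚ) + 1) / 2) * hQ

lemma stmt18g_pos (m : ℕ) : 0 < stmt18g m := by
  induction m with
  | zero => simp [stmt18g]
  | succ m ih => exact Nat.mul_pos (by omega) ih

set_option maxHeartbeats 2000000 in
theorem stmt18 (m k : ℕ) (hk : 1 ≤ k) (η : Equiv.Perm (Fin (2 * m)))
    (hη1 : η * η = 1) (hη2 : ∀ i, η i ≠ i) :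
    (∑ U ∈ Finset.univ.filter
        (fun U : Equiv.Perm (Fin (2 * m)) => U * U = 1 ∧ ∀ i, U i ≠ i),
        ∏ j ∈ Finset.range k,
          ((((Finset.univ.filter (fun i : Fin (2 * m) => U i = η i)).card / 2 : ℕ) : ℚ) - j))
      / ((Finset.univ.filter
        (fun U : Equiv.Perm (Fin (2 * m)) => U * U = 1 ∧ ∀ i, U i ≠ i)).card : ℚ)
    =
    (∏ j ∈ Finset.range k, ((m : ℚ) - j))
      / (∏ j ∈ Finset.range k, ((2 * m : ℚ) - (2 * j + 1))) := by
  have hcard : Fintype.card (Fin (2 * m)) = 2 * m := Fintype.card_fin _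
  have hFeq : stmt18F (Fin (2 * m)) = Finset.univ.filter
      (fun U : Equiv.Perm (Fin (2 * m)) => U * U = 1 ∧ ∀ i, U i ≠ i) := by
    unfold stmt18F
    exact Finset.filter_congr_decidable _ _ _
  have hmain := stmt18_S k m (Fin (2 * m)) η hcard hη1 hη2
  rw [hFeq] at hmain
  have hcnt : (Finset.univ.filter
      (fun U : Equiv.Perm (Fin (2 * m)) => U * U = 1 ∧ ∀ i, U i ≠ i)).card = stmt18g m := by
    rw [← hFeq]
    exact stmt18_count m _ hcard
  have hD0 : (∏ j ∈ Finset.range k, ((2 * m : ℚ) - (2 * j + 1))) ≠ 0 := by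
    refine Finset.prod_ne_zero_iff.2 fun j _ => sub_ne_zero.2 fun h => ?_
    have h' : (2 * m : ℕ) = 2 * j + 1 := by exact_mod_cast h
    omega
  have hg0 : ((stmt18g m : ℕ) : ℚ) ≠ 0 := Nat.cast_ne_zero.2 (stmt18g_pos m).ne'
  rw [hcnt, div_eq_div_iff hg0 hD0, ← stmt18_castDesc m k,
    Finset.sum_congr rfl (fun U _ => (stmt18_castDesc
      ((Finset.univ.filter (fun i : Fin (2 * m) => U i = η i)).card / 2) k).symm),
    ← Nat.cast_sum]
  exact hmain
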